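/- In the rigged-configuration direct product model: fix N ≥ 1, positive integers (m_j), (p_j), integers (B_{j,k}), a sequence a = (α_j) of common divisors of m_j and p_j, X₁ = ℤ^N, X₂^(a) = Π_j Λ^(α_j)(m_j,p_j), and let H₂ (free abelian on s₁,…,s_N) act on X₁ × X₂^(a) by Γ₂(g,(ω,λ)) = (φ(g,ω,λ), Υ(g,λ)), where for g = Σ n_k s_k: Υ(g,λ) = (λ^(j)(n_j+i) − λ^(j)(n_j+1))_{i,j} and φ(g,ω,λ) = ω + (λ^(j)(n_j+1) + Σ_k B_{j,k} n_k)_j. Let H₂^(a) ≤ H₂ be generated by (m_j/α_j)s_j. Then for every g = Σ n_k (m_k/α_k) s_k ∈ H₂^(a), every ω ∈ ℤ^N, and every λ ∈ X₂^(a), one has φ(g,ω,λ) = ω + F^(a)·n, where n = (n₁,…,n_N)ᵀ and F^(a)_{j,k} = (δ_{j,k}p_k + B_{j,k}m_k)/α_k; in particular φ(g,ω,λ) is independent of λ ∈ X₂^(a). -/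

import Mathlib

/-- The set `Λ(m,p)`. -/
def Lambda (m p : ℕ) : Set (ℤ → ℤ) :=
  {l | l 1 = 0 ∧ (∀ i : ℤ, l i ≤ l (i + 1)) ∧ ∀ i : ℤ, l (i + (m : ℤ)) = l i + (p : ℤ)}

/-- `Λ^(α)(m,p)`. -/
def LambdaExact (m p α : ℕ) : Set (ℤ → ℤ) :=
  {l | l ∈ Lambda (m / α) (p / α) ∧
    ∀ α' : ℕ, α' ∣ m → α' ∣ p → α ∣ α' → α < α' → l ∉ Lambda (m / α') (p / α')}

lemma lam_mul (l : ℤ → ℤ) (M P : ℤ) (h1 : l 1 = 0)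
    (hper : ∀ i : ℤ, l (i + M) = l i + P) : ∀ n : ℤ, l (M * n + 1) = P * n := by
  have key : ∀ n : ℤ, l (M * n + 1) = P * n := by
    intro n
    induction n using Int.induction_on with
    | zero => simpa using h1
    | succ k ih =>
      have : M * (k + 1 : ℤ) + 1 = (M * k + 1) + M := by ring
      rw [this, hper, ih]; ring
    | pred k ih =>
      have h := hper (M * (-(k : ℤ) - 1) + 1)
      have e : M * (-(k : ℤ) - 1) + 1 + M = M * (-(k : ℤ)) + 1 := by ring
      rw [e, ih] at h
      have : l (M * (-(k : ℤ) - 1) + 1) = P * (-(k : ℤ)) - P := by linarith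
      rw [this]; ring
  exact key

/-- Lemma 3.7(iii) of the paper: for
`g = Σ_k n_k (m_k/α_k) s_k ∈ H₂^(a)`, any `ω ∈ ℤ^N` and any
`λ ∈ X₂^(a) = Π_j Λ^(α_j)(m_j,p_j)`,
`φ(g,ω,λ) = ω + F^(a)·n`; in particular it is independent of `λ`. -/
theorem phi_on_H2a_eq_translation
    (N : ℕ) (m p α : Fin N → ℕ) (B : Fin N → Fin N → ℤ)
    (hm : ∀ j, 0 < m j) (hp : ∀ j, 0 < p j)
    (hαm : ∀ j, α j ∣ m j) (hαp : ∀ j, α j ∣ p j)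
    (F : Matrix (Fin N) (Fin N) ℤ)
    (hF : ∀ j k, (α k : ℤ) * F j k =
      (if j = k then (p k : ℤ) else 0) + B j k * (m k : ℤ))
    (lam : Fin N → (ℤ → ℤ)) (hlam : ∀ j, lam j ∈ LambdaExact (m j) (p j) (α j))
    (ω : Fin N → ℤ) (n : Fin N → ℤ) :
    ∀ j, ω j + (lam j (((m j / α j : ℕ) : ℤ) * n j + 1)
          + ∑ k, B j k * (((m k / α k : ℕ) : ℤ) * n k))
        = ω j + ∑ k, F j k * n k := by
  intro j
  have hαpos : ∀ k, 0 < α k := by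
    intro k
    rcases Nat.eq_zero_or_pos (α k) with h | h
    · exact absurd ((h ▸ hαm k : (0:ℕ) ∣ m k)) (by simpa [Nat.zero_dvd] using (hm k).ne')
    · exact h
  obtain ⟨h1, _, hper⟩ := (hlam j).1
  have hlamval : lam j (((m j / α j : ℕ) : ℤ) * n j + 1)
      = ((p j / α j : ℕ) : ℤ) * n j := lam_mul _ _ _ h1 hper (n j)
  rw [hlamval]
  have key : ((p j / α j : ℕ) : ℤ) * n j + ∑ k, B j k * (((m k / α k : ℕ) : ℤ) * n k)
      = ∑ k, (if j = k then ((p k / α k : ℕ) : ℤ) else 0) * n k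
        + ∑ k, B j k * (((m k / α k : ℕ) : ℤ) * n k) := by
    congr 1
    simp only [ite_mul, zero_mul]
    rw [Finset.sum_ite_eq Finset.univ j (fun k => ((p k / α k : ℕ) : ℤ) * n k)]
    simp
  rw [key, ← Finset.sum_add_distrib]
  congr 1
  apply Finset.sum_congr rfl
  intro k _
  have hcast_m : ((m k / α k : ℕ) : ℤ) * (α k : ℤ) = (m k : ℤ) := by
    rw [← Nat.cast_mul, Nat.div_mul_cancel (hαm k)]
  have hcast_p : ((p k / α k : ℕ) : ℤ) * (α k : ℤ) = (p k : ℤ) := by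
    rw [← Nat.cast_mul, Nat.div_mul_cancel (hαp k)]
  have hαk : (α k : ℤ) ≠ 0 := by exact_mod_cast (hαpos k).ne'
  apply mul_left_cancel₀ hαk
  have := hF j k
  calc (α k : ℤ) * ((if j = k then ((p k / α k : ℕ) : ℤ) else 0) * n k
        + B j k * (((m k / α k : ℕ) : ℤ) * n k))
      = ((if j = k then ((p k / α k : ℕ) : ℤ) * (α k : ℤ) else 0)
        + B j k * (((m k / α k : ℕ) : ℤ) * (α k : ℤ))) * n k := by
        split <;> ring
    _ = ((if j = k then (p k : ℤ) else 0) + B j k * (m k : ℤ)) * n k := by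
        rw [hcast_m, hcast_p]
    _ = (α k : ℤ) * (F j k * n k) := by rw [← this]; ring
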